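/- Let m = p₁ ⋯ p_s be a squarefree integer with s ≥ 1 distinct prime factors. Then the clique number and chromatic number of the intersection graph of ideals of ℤ_m satisfy ω(G(ℤ_m)) = χ(G(ℤ_m)) = 2^{s−1} − 1. -/

import Mathlib

private lemma aux_dvd_cast {m d n : ℕ} [NeZero m] (hd : d ∣ m) :
    (d : ZMod m) ∣ (n : ZMod m) ↔ d ∣ n := by
  constructor
  · rintro ⟨c, hc⟩
    rw [← ZMod.natCast_zmod_val c, ← Nat.cast_mul, ZMod.natCast_eq_natCast_iff] at hc
    have h1 : (m : ℤ) ∣ (d * c.val : ℕ) - (n : ℤ) := hc.dvd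
    have hdm : (d : ℤ) ∣ (m : ℤ) := Int.natCast_dvd_natCast.mpr hd
    have h2 : (d : ℤ) ∣ (n : ℤ) := by
      have h3 : (n : ℤ) = (d : ℤ) * c.val - ((d * c.val : ℕ) - (n : ℤ)) := by push_cast; ring
      rw [h3]
      exact dvd_sub (Dvd.intro _ rfl) (hdm.trans h1)
    exact_mod_cast h2
  · rintro ⟨c, rfl⟩
    push_cast
    exact Dvd.intro _ rfl

private lemma aux_mem_span_natCast {m d : ℕ} [NeZero m] (hd : d ∣ m) (n : ℕ) :
    (n : ZMod m) ∈ Ideal.span {(d : ZMod m)} ↔ d ∣ n :=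
  Ideal.mem_span_singleton.trans (aux_dvd_cast hd)

private lemma aux_mem_span_val {m d : ℕ} [NeZero m] (hd : d ∣ m) (x : ZMod m) :
    x ∈ Ideal.span {(d : ZMod m)} ↔ d ∣ x.val := by
  conv_lhs => rw [← ZMod.natCast_zmod_val x]
  exact aux_mem_span_natCast hd x.val

private lemma aux_card_divisors {n : ℕ} (hn : Squarefree n) :
    n.divisors.card = 2 ^ n.primeFactors.card := by
  rw [Nat.card_divisors hn.ne_zero, Finset.prod_congr rfl
    (fun p hp => (by
      have h1 : n.factorization p ≤ 1 :=
        (Nat.squarefree_iff_factorization_le_one hn.ne_zero).mp hn p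
      have h2 : n.factorization p ≠ 0 := by
        rwa [← Finsupp.mem_support_iff, Nat.support_factorization]
      omega : n.factorization p + 1 = 2)), Finset.prod_const]

/-- The intersection graph of ideals of `R`: vertices are the nontrivial ideals of `R`,
and two distinct vertices `I`, `J` are adjacent iff `I ∩ J ≠ 0`. -/
def idealGraph (R : Type*) [CommRing R] :
    SimpleGraph {I : Ideal R // I ≠ ⊥ ∧ I ≠ ⊤} where
  Adj I J := I ≠ J ∧ I.1 ⊓ J.1 ≠ ⊥
  symm := ⟨fun I J h => ⟨h.1.symm, by rw [inf_comm]; exact h.2⟩⟩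
  loopless := ⟨fun I h => h.1 rfl⟩

/-- For a squarefree integer `m ≥ 2` with `s` distinct prime factors,
`ω(G(ℤ_m)) = χ(G(ℤ_m)) = 2^(s−1) − 1`. -/
theorem idealGraph_squarefree_cliqueNum_chromaticNumber (m : ℕ) (hm : 2 ≤ m)
    (hsq : Squarefree m) :
    (idealGraph (ZMod m)).cliqueNum = 2 ^ (m.primeFactors.card - 1) - 1 ∧
      (idealGraph (ZMod m)).chromaticNumber =
        ((2 ^ (m.primeFactors.card - 1) - 1 : ℕ) : ℕ∞) := by
  classical
  have hm0 : m ≠ 0 := by omega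
  haveI : NeZero m := ⟨hm0⟩
  set s := m.primeFactors.card with hs
  set N := 2 ^ (s - 1) - 1 with hN
  obtain ⟨p, hp⟩ := Nat.nonempty_primeFactors.mpr (by omega : 1 < m)
  have hpp : p.Prime := Nat.prime_of_mem_primeFactors hp
  have hpm : p ∣ m := Nat.dvd_of_mem_primeFactors hp
  set k := m / p with hk
  have hkm : p * k = m := Nat.mul_div_cancel' hpm
  have hk0 : k ≠ 0 := by intro h; rw [h, mul_zero] at hkm; omega
  have hkdvd : k ∣ m := Dvd.intro_left p hkm
  have hppm : ¬ (p * p ∣ m) := fun h => hpp.ne_one (Nat.isUnit_iff.mp (hsq p h))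
  have hpk : ¬ p ∣ k := fun h => hppm (hkm ▸ mul_dvd_mul_left p h)
  have hkltm : k < m := by
    rw [← hkm]
    exact lt_mul_of_one_lt_left (Nat.pos_of_ne_zero hk0) hpp.one_lt
  have hksq : Squarefree k := hsq.squarefree_of_dvd hkdvd
  have hkcard : k.primeFactors.card = s - 1 := by
    have h1 : m.primeFactors = {p} ∪ k.primeFactors := by
      rw [← hkm, Nat.primeFactors_mul hpp.ne_zero hk0, hpp.primeFactors]
    have h2 : p ∉ k.primeFactors := fun h => hpk (Nat.dvd_of_mem_primeFactors h)
    have h3 : s = 1 + k.primeFactors.card := by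
      rw [hs, h1, Finset.card_union_of_disjoint (by simpa using h2), Finset.card_singleton]
    omega
  set D : Finset ℕ := k.divisors.erase 1 with hD
  have hDcard : D.card = N := by
    rw [hD, Finset.card_erase_of_mem (Nat.one_mem_divisors.mpr hk0), aux_card_divisors hksq,
      hkcard]
  -- the span map
  set g : ℕ → Ideal (ZMod m) := fun d => Ideal.span {(d : ZMod m)} with hg
  have hbot : ∀ d, d ∣ m → (g d = ⊥ ↔ d = m) := by
    intro d hd
    simp only [hg]
    rw [Ideal.span_singleton_eq_bot, ZMod.natCast_eq_zero_iff]
    exact ⟨fun h => Nat.dvd_antisymm hd h, fun h => h ▸ dvd_rfl⟩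
  have htop : ∀ d, d ∣ m → (g d = ⊤ ↔ d = 1) := by
    intro d hd
    constructor
    · intro h
      have h1 : ((1 : ℕ) : ZMod m) ∈ g d := by rw [h]; exact Submodule.mem_top
      simp only [hg] at h1
      exact Nat.dvd_one.mp ((aux_mem_span_natCast hd 1).mp h1)
    · intro h
      simp only [hg, h, Nat.cast_one, Ideal.span_singleton_one]
  have hinj : ∀ d, d ∣ m → ∀ e, e ∣ m → g d = g e → d = e := by
    intro d hd e he h
    have h1 : (e : ZMod m) ∈ g d := by
      rw [h]; simp only [hg]; exact Ideal.subset_span rfl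
    have h2 : (d : ZMod m) ∈ g e := by
      rw [← h]; simp only [hg]; exact Ideal.subset_span rfl
    simp only [hg] at h1 h2
    exact Nat.dvd_antisymm ((aux_mem_span_natCast hd e).mp h1)
      ((aux_mem_span_natCast he d).mp h2)
  haveI : IsPrincipalIdealRing (ZMod m) :=
    IsPrincipalIdealRing.of_surjective (Int.castRingHom (ZMod m)) ZMod.intCast_surjective
  have hsurj : ∀ I : Ideal (ZMod m), ∃ d, d ∣ m ∧ g d = I := by
    intro I
    obtain ⟨x, hx⟩ := (IsPrincipalIdealRing.principal I).principal
    refine ⟨Nat.gcd x.val m, Nat.gcd_dvd_right _ _, ?_⟩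
    have hxv : ((x.val : ℕ) : ZMod m) = x := ZMod.natCast_zmod_val x
    apply le_antisymm
    · rw [hx]
      simp only [hg]
      rw [Ideal.span_le, Set.singleton_subset_iff]
      have hb : ((Nat.gcd x.val m : ℤ) : ZMod m)
          = (((x.val : ℤ) * Nat.gcdA x.val m + (m : ℤ) * Nat.gcdB x.val m : ℤ) : ZMod m) := by
        rw [← Nat.gcd_eq_gcd_ab]
      push_cast at hb
      rw [ZMod.natCast_self, zero_mul, add_zero, hxv] at hb
      exact Ideal.mem_span_singleton.mpr (hb ▸ Dvd.intro _ rfl)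
    · rw [hx, Submodule.span_singleton_le_iff_mem]
      simp only [hg]
      exact (aux_mem_span_val (Nat.gcd_dvd_right _ _) x).mpr (Nat.gcd_dvd_left _ _)
  -- disjointness from lcm = m
  have hdisj : ∀ d, d ∣ m → ∀ e, e ∣ m → Nat.lcm d e = m → g d ⊓ g e = ⊥ := by
    intro d hd e he hlcm
    rw [eq_bot_iff]
    intro x hx
    rw [Submodule.mem_inf] at hx
    simp only [hg] at hx
    have h1 : d ∣ x.val := (aux_mem_span_val hd x).mp hx.1
    have h2 : e ∣ x.val := (aux_mem_span_val he x).mp hx.2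
    have h3 : m ∣ x.val := by
      have h5 := Nat.lcm_dvd h1 h2
      rwa [hlcm] at h5
    have h4 : x.val = 0 := Nat.eq_zero_of_dvd_of_lt h3 (ZMod.val_lt x)
    rw [Submodule.mem_bot, ← ZMod.natCast_zmod_val x, h4, Nat.cast_zero]
  have hlcmmul : ∀ d, d ∣ m → ∀ e, e ∣ m → d * e = m → Nat.lcm d e = m := by
    intro d hd e he hmul
    have hg2 : Nat.gcd d e * Nat.gcd d e ∣ m := by
      rw [← hmul]; exact mul_dvd_mul (Nat.gcd_dvd_left _ _) (Nat.gcd_dvd_right _ _)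
    have hcop : Nat.Coprime d e := Nat.isUnit_iff.mp (hsq _ hg2)
    rw [Nat.Coprime.lcm_eq_mul hcop, hmul]
  have hdvdk : ∀ d, d ∣ m → ¬ p ∣ d → d ∣ k := by
    intro d hdm hpd
    have hcop : Nat.Coprime d p := Nat.Coprime.symm (hpp.coprime_iff_not_dvd.mpr hpd)
    exact hcop.dvd_of_dvd_mul_left (by rw [hkm]; exact hdm)
  -- D facts
  have hDfact : ∀ d ∈ D, d ∣ m ∧ d ≠ 1 ∧ d ≠ m ∧ d ∣ k := by
    intro d hd
    rw [hD, Finset.mem_erase, Nat.mem_divisors] at hd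
    obtain ⟨hd1, hdk, -⟩ := hd
    have hdm : d ∣ m := hdk.trans hkdvd
    refine ⟨hdm, hd1, ?_, hdk⟩
    intro h
    have := Nat.le_of_dvd (Nat.pos_of_ne_zero hk0) hdk
    omega
  have hgood : ∀ d ∈ D, g d ≠ ⊥ ∧ g d ≠ ⊤ := by
    intro d hd
    obtain ⟨hdm, hd1, hdm', hdk⟩ := hDfact d hd
    exact ⟨fun h => hdm' ((hbot d hdm).mp h), fun h => hd1 ((htop d hdm).mp h)⟩
  -- the clique
  set F : {d // d ∈ D} → {I : Ideal (ZMod m) // I ≠ ⊥ ∧ I ≠ ⊤} :=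
    fun d => ⟨g d.1, (hgood d.1 d.2).1, (hgood d.1 d.2).2⟩ with hF
  have hFinj : Function.Injective F := by
    intro d e h
    have h1 : g d.1 = g e.1 := congrArg Subtype.val h
    exact Subtype.ext (hinj d.1 (hDfact d.1 d.2).1 e.1 (hDfact e.1 e.2).1 h1)
  have hclique : (idealGraph (ZMod m)).IsNClique N (D.attach.image F) := by
    constructor
    · intro a ha b hb hne
      simp only [Finset.coe_image, Set.mem_image, Finset.mem_coe, Finset.mem_attach] at ha hb
      obtain ⟨d, -, rfl⟩ := ha
      obtain ⟨e, -, rfl⟩ := hb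
      refine ⟨hne, ?_⟩
      simp only [hF]
      intro hEq
      have hlk : Nat.lcm d.1 e.1 ∣ k :=
        Nat.lcm_dvd (hDfact d.1 d.2).2.2.2 (hDfact e.1 e.2).2.2.2
      have h1 : ((Nat.lcm d.1 e.1 : ℕ) : ZMod m) ∈ g d.1 ⊓ g e.1 := by
        simp only [hg]
        exact Submodule.mem_inf.mpr
          ⟨(aux_mem_span_natCast (hDfact d.1 d.2).1 _).mpr (Nat.dvd_lcm_left _ _),
           (aux_mem_span_natCast (hDfact e.1 e.2).1 _).mpr (Nat.dvd_lcm_right _ _)⟩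
      rw [hEq, Submodule.mem_bot, ZMod.natCast_eq_zero_iff] at h1
      have h2 : m ∣ k := h1.trans hlk
      have := Nat.le_of_dvd (Nat.pos_of_ne_zero hk0) h2
      omega
    · rw [Finset.card_image_of_injective _ hFinj, Finset.card_attach, hDcard]
  -- coloring
  have hvert : ∀ I : {I : Ideal (ZMod m) // I ≠ ⊥ ∧ I ≠ ⊤},
      ∃ d, d ∣ m ∧ d ≠ 1 ∧ d ≠ m ∧ g d = I.1 := by
    intro I
    obtain ⟨d, hdm, hgd⟩ := hsurj I.1
    refine ⟨d, hdm, ?_, ?_, hgd⟩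
    · intro h
      exact I.2.2 (by rw [← hgd]; exact (htop d hdm).mpr h)
    · intro h
      exact I.2.1 (by rw [← hgd]; exact (hbot d hdm).mpr h)
  choose dd hddm hdd1 hddm' hddg using hvert
  set cfun : {I : Ideal (ZMod m) // I ≠ ⊥ ∧ I ≠ ⊤} → ℕ :=
    fun v => if p ∣ dd v then m / dd v else dd v with hcf
  have hcmem : ∀ v, cfun v ∈ D := by
    intro v
    rw [hD, Finset.mem_erase, Nat.mem_divisors]
    simp only [hcf]
    by_cases hpd : p ∣ dd v
    · rw [if_pos hpd]
      have h1 : m / dd v ∣ m := Nat.div_dvd_of_dvd (hddm v)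
      have h2 : ¬ p ∣ (m / dd v) := by
        intro h
        refine hppm ?_
        have h3 := mul_dvd_mul h hpd
        rwa [Nat.div_mul_cancel (hddm v)] at h3
      refine ⟨?_, hdvdk _ h1 h2, hk0⟩
      intro h
      have h4 : m / (m / dd v) = dd v := Nat.div_div_self (hddm v) hm0
      rw [h, Nat.div_one] at h4
      exact hddm' v h4.symm
    · rw [if_neg hpd]
      exact ⟨hdd1 v, hdvdk _ (hddm v) hpd, hk0⟩
  have hcvalid : ∀ v w, (idealGraph (ZMod m)).Adj v w → cfun v ≠ cfun w := by
    intro v w hadj heq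
    have hne : v ≠ w := hadj.1
    have hinf : v.1 ⊓ w.1 ≠ ⊥ := hadj.2
    simp only [hcf] at heq
    have hvw : dd v = dd w → False := by
      intro h
      refine hne (Subtype.ext ?_)
      rw [← hddg v, ← hddg w, h]
    by_cases h1 : p ∣ dd v <;> by_cases h2 : p ∣ dd w
    · rw [if_pos h1, if_pos h2] at heq
      refine hvw ?_
      have hv := Nat.div_div_self (hddm v) hm0
      have hw := Nat.div_div_self (hddm w) hm0
      rw [← hv, ← hw, heq]
    · rw [if_pos h1, if_neg h2] at heq
      have hmul : dd w * dd v = m := by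
        rw [← heq, Nat.div_mul_cancel (hddm v)]
      have hlcm : Nat.lcm (dd v) (dd w) = m := by
        rw [Nat.lcm_comm]
        exact hlcmmul _ (hddm w) _ (hddm v) hmul
      refine hinf ?_
      rw [← hddg v, ← hddg w]
      exact hdisj _ (hddm v) _ (hddm w) hlcm
    · rw [if_neg h1, if_pos h2] at heq
      have hmul : dd v * dd w = m := by
        rw [heq, Nat.div_mul_cancel (hddm w)]
      have hlcm : Nat.lcm (dd v) (dd w) = m := hlcmmul _ (hddm v) _ (hddm w) hmul
      refine hinf ?_
      rw [← hddg v, ← hddg w]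
      exact hdisj _ (hddm v) _ (hddm w) hlcm
    · rw [if_neg h1, if_neg h2] at heq
      exact hvw heq
  have C : (idealGraph (ZMod m)).Coloring {d // d ∈ D} :=
    SimpleGraph.Coloring.mk (fun v => ⟨cfun v, hcmem v⟩)
      (fun {v w} hadj h => hcvalid v w hadj (congrArg Subtype.val h))
  have hcolorable : (idealGraph (ZMod m)).Colorable N := by
    have h1 := C.colorable
    rwa [Fintype.card_coe, hDcard] at h1
  -- assembly
  haveI : Finite (Ideal (ZMod m)) :=
    Finite.of_injective (fun I => (I : Set (ZMod m))) SetLike.coe_injective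
  haveI : Fintype {I : Ideal (ZMod m) // I ≠ ⊥ ∧ I ≠ ⊤} := Fintype.ofFinite _
  have hub : (idealGraph (ZMod m)).cliqueNum ≤ N := by
    obtain ⟨t, ht⟩ := (idealGraph (ZMod m)).exists_isNClique_cliqueNum
    rw [← ht.card_eq]
    exact ht.isClique.card_le_of_colorable hcolorable
  have hlb : N ≤ (idealGraph (ZMod m)).cliqueNum := by
    rw [← hclique.card_eq]
    exact hclique.isClique.card_le_cliqueNum
  refine ⟨le_antisymm hub hlb, le_antisymm hcolorable.chromaticNumber_le ?_⟩
  have h2 := hclique.isClique.card_le_chromaticNumber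
  rwa [hclique.card_eq] at h2
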